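/- Let Γ be a finite simplicial graph with vertex set V such that Z = {v ∈ V : st(v) = V} is non-empty, and let A = A(Γ). Let π_{a,K₁}, π_{a,K₂}, π_{b,L₁}, π_{b,L₂} be four distinct partial conjugations (so K₁ ≠ K₂ and L₁ ≠ L₂). Then π_{a,Kᵢ} and π_{b,Lⱼ} fail to commute in Aut(A) for all i, j ∈ {1,2} if and only if the set {π_{a,K₁}, π_{a,K₂}, π_{b,L₁}, π_{b,L₂}} is a δ-p-set. -/
import Mathlib


open SimpleGraph

/-- The star of a vertex: the vertex together with its neighbours. -/
def Gstar {V : Type} (Γ : SimpleGraph V) (a : V) : Set V := insert a (Γ.neighborSet a)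

/-- The set of vertices whose star is the whole vertex set. -/
def Zset {V : Type} (Γ : SimpleGraph V) : Set V := {v | Gstar Γ v = Set.univ}

/-- `K` is (the vertex set of) a connected component of the full subgraph of `Γ`
induced on the vertex set `S`. -/
def IsCompOf {V : Type} (Γ : SimpleGraph V) (S K : Set V) : Prop :=
  ∃ c : (Γ.induce S).ConnectedComponent, K = Subtype.val '' c.supp

/-- The defining relators of the right-angled Artin group of `Γ`. -/
def raagRels {V : Type} (Γ : SimpleGraph V) : Set (FreeGroup V) :=
  {r | ∃ a b : V, Γ.Adj a b ∧
    r = FreeGroup.of a * FreeGroup.of b * (FreeGroup.of a)⁻¹ * (FreeGroup.of b)⁻¹}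

/-- The right-angled Artin group `A(Γ)`. -/
abbrev RAAG {V : Type} (Γ : SimpleGraph V) : Type := PresentedGroup (raagRels Γ)

/-- The generator of `A(Γ)` corresponding to a vertex `v`. -/
def raagGen {V : Type} (Γ : SimpleGraph V) (v : V) : RAAG Γ := PresentedGroup.of v

/-- The pure symmetric automorphism group: automorphisms sending each standard
generator to a conjugate of itself. -/
def PSA {V : Type} (Γ : SimpleGraph V) : Subgroup (MulAut (RAAG Γ)) where
  carrier := {φ | ∀ v : V, IsConj (raagGen Γ v) (φ (raagGen Γ v))}
  one_mem' := fun v => IsConj.refl _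
  mul_mem' := by
    intro φ ψ hφ hψ v
    have h2 : IsConj (φ (raagGen Γ v)) (φ (ψ (raagGen Γ v))) :=
      φ.toMonoidHom.map_isConj (hψ v)
    simpa [MulAut.mul_apply] using (hφ v).trans h2
  inv_mem' := by
    intro φ hφ v
    have h := (φ⁻¹ : MulAut (RAAG _)).toMonoidHom.map_isConj (hφ v)
    simp only [MulEquiv.toMonoidHom_eq_coe, MonoidHom.coe_coe, MulAut.inv_def,
      MulEquiv.symm_apply_apply] at h
    exact h.symm

/-- `φ` is the partial conjugation `π_{a,K}`. -/
def IsPartialConj {V : Type} (Γ : SimpleGraph V) (a : V) (K : Set V)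
    (φ : MulAut (RAAG Γ)) : Prop :=
  IsCompOf Γ (Gstar Γ a)ᶜ K ∧
  (∀ v ∈ K, φ (raagGen Γ v) = (raagGen Γ a)⁻¹ * raagGen Γ v * raagGen Γ a) ∧
  (∀ v ∉ K, φ (raagGen Γ v) = raagGen Γ v)

/-- Combinatorial data (acting letter, domain) of the partial conjugations. -/
def PCSet {V : Type} (Γ : SimpleGraph V) : Set (V × Set V) :=
  {p | IsCompOf Γ (Gstar Γ p.1)ᶜ p.2}

/-- A non-trivial admissible partition (for p-sets). -/
def IsAdmissiblePartition {V : Type} (Q₁ Q₂ : Set (V × Set V)) : Prop :=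
  Disjoint Q₁ Q₂ ∧ Q₁.Nonempty ∧ Q₂.Nonempty ∧
    ∀ p ∈ Q₁, ∀ q ∈ Q₂, p.1 ∈ q.2 ∧ q.1 ∈ p.2

/-- A p-set of partial conjugations. -/
def IsPSet {V : Type} (Γ : SimpleGraph V) (Q : Set (V × Set V)) : Prop :=
  Q ⊆ PCSet Γ ∧
  (∀ a : V, {p ∈ Q | p.1 = a}.Subsingleton) ∧
  ∃ Q₁ Q₂ : Set (V × Set V), Q₁ ∪ Q₂ = Q ∧ IsAdmissiblePartition Q₁ Q₂

/-- A non-trivial admissible partition (for δ-p-sets). -/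
def IsDeltaAdmissiblePartition {V : Type} (Q₁ Q₂ : Set (V × Set V)) : Prop :=
  Disjoint Q₁ Q₂ ∧ Q₁.Nonempty ∧ Q₂.Nonempty ∧
    ∀ p ∈ Q₁, ∀ q ∈ Q₂, p.1 ∈ q.2 ∨ q.1 ∈ p.2 ∨ p.2 = q.2

/-- A δ-p-set of partial conjugations. -/
def IsDeltaPSet {V : Type} (Γ : SimpleGraph V) (Q : Set (V × Set V)) : Prop :=
  Q ⊆ PCSet Γ ∧
  (∀ a : V, a ∉ Zset Γ →
    ({p ∈ Q | p.1 = a}.ncard = 0 ∨ {p ∈ Q | p.1 = a}.ncard = 2)) ∧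
  ∃ Q₁ Q₂ : Set (V × Set V), Q₁ ∪ Q₂ = Q ∧ IsDeltaAdmissiblePartition Q₁ Q₂

/-- `Γ` has a separating intersection of links. -/
def HasSIL {V : Type} (Γ : SimpleGraph V) : Prop :=
  ∃ a b : V, a ≠ b ∧ ¬Γ.Adj a b ∧
    ∃ M : Set V, IsCompOf Γ (Γ.neighborSet a ∩ Γ.neighborSet b)ᶜ M ∧ a ∉ M ∧ b ∉ M

/-- The full subgraph spanned by `U` is dominating. -/
def Dominating {V : Type} (Γ : SimpleGraph V) (U : Set V) : Prop :=
  ∀ v : V, v ∈ U ∨ ∃ u ∈ U, Γ.Adj v u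

/-- The full subgraph spanned by `U` is disconnected or non-dominating. -/
def Missing {V : Type} (Γ : SimpleGraph V) (U : Set V) : Prop :=
  ¬(Γ.induce U).Connected ∨ ¬Dominating Γ U

section HelperLemmas

variable {V : Type} {Γ : SimpleGraph V} {S S' K L : Set V} {a b : V}

lemma IsCompOf.nonempty (h : IsCompOf Γ S K) : K.Nonempty := by
  obtain ⟨c, rfl⟩ := h
  obtain ⟨u, hu⟩ := Quot.exists_rep c
  exact ⟨u, ⟨u, by simp [ConnectedComponent.mem_supp_iff, ← hu]; rfl, rfl⟩⟩

lemma IsCompOf.subset (h : IsCompOf Γ S K) : K ⊆ S := by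
  obtain ⟨c, rfl⟩ := h
  rintro v ⟨u, _, rfl⟩
  exact u.2

lemma IsCompOf.closed (h : IsCompOf Γ S K) {v w : V} (hv : v ∈ K) (hw : w ∈ S)
    (hadj : Γ.Adj v w) : w ∈ K := by
  obtain ⟨c, rfl⟩ := h
  obtain ⟨u, hu, rfl⟩ := hv
  refine ⟨⟨w, hw⟩, ?_, rfl⟩
  rw [ConnectedComponent.mem_supp_iff] at hu ⊢
  rw [← hu]
  exact ConnectedComponent.sound (Adj.reachable (by exact hadj.symm : (Γ.induce S).Adj ⟨w, hw⟩ u))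

lemma IsCompOf.eq_of_mem_inter (h : IsCompOf Γ S K) (h' : IsCompOf Γ S L) {x : V}
    (hx : x ∈ K) (hx' : x ∈ L) : K = L := by
  obtain ⟨c, rfl⟩ := h
  obtain ⟨c', rfl⟩ := h'
  obtain ⟨u, hu, rfl⟩ := hx
  obtain ⟨u', hu', huu⟩ := hx'
  rw [ConnectedComponent.mem_supp_iff] at hu hu'
  have : u' = u := Subtype.ext huu
  subst this
  rw [← hu, ← hu']

lemma walk_transfer (hcl : ∀ v ∈ K, ∀ w ∈ S, Γ.Adj v w → w ∈ K) (hKS' : K ⊆ S') :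
    ∀ {u w : S} (_ : (Γ.induce S).Walk u w) (hu : ↑u ∈ K),
      ∃ hw : ↑w ∈ K, (Γ.induce S').Reachable ⟨u, hKS' hu⟩ ⟨w, hKS' hw⟩ := by
  intro u w p
  induction p with
  | nil => exact fun hu => ⟨hu, Reachable.refl _⟩
  | @cons u x w h p ih =>
      intro hu
      have hadj : Γ.Adj ↑u ↑x := h
      have hx : ↑x ∈ K := hcl _ hu _ x.2 hadj
      obtain ⟨hw, hr⟩ := ih hx
      exact ⟨hw, (Adj.reachable (by exact hadj : (Γ.induce S').Adj ⟨u, hKS' hu⟩ ⟨x, hKS' hx⟩)).trans hr⟩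

lemma IsCompOf.subset_of_inter (h : IsCompOf Γ S K) (h' : IsCompOf Γ S' L)
    (hKS' : K ⊆ S') {x : V} (hxK : x ∈ K) (hxL : x ∈ L) : K ⊆ L := by
  obtain ⟨c, hc⟩ := h
  obtain ⟨c', hc'⟩ := h'
  intro v hv
  -- x and v both in K, get reachability in induce S
  obtain ⟨u, hu, rfl⟩ := hc ▸ hv
  obtain ⟨ux, hux, hxx⟩ := hc ▸ hxK
  rw [ConnectedComponent.mem_supp_iff] at hu hux
  have hreach : (Γ.induce S).Reachable u ux := ConnectedComponent.exact (hu.trans hux.symm)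
  obtain ⟨p⟩ := hreach
  have hcl : ∀ v ∈ K, ∀ w ∈ S, Γ.Adj v w → w ∈ K := fun v hv w hw hadj =>
    IsCompOf.closed ⟨c, hc⟩ hv hw hadj
  have huK : ↑u ∈ K := hc ▸ ⟨u, by rwa [ConnectedComponent.mem_supp_iff], rfl⟩
  obtain ⟨hw, hr⟩ := walk_transfer hcl hKS' p huK
  -- now u reachable to ux in induce S', and ↑ux = x ∈ L
  obtain ⟨w', hw', hww⟩ := hc' ▸ hxL
  rw [ConnectedComponent.mem_supp_iff] at hw'
  have : (⟨↑ux, hKS' hw⟩ : S') = w' := Subtype.ext (by rw [hxx, ← hww])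
  rw [hc']
  refine ⟨⟨↑u, hKS' huK⟩, ?_, rfl⟩
  rw [ConnectedComponent.mem_supp_iff, ← hw', ← this]
  exact ConnectedComponent.sound hr

lemma mem_gstar_self : a ∈ Gstar Γ a := Set.mem_insert _ _

lemma notMem_of_comp (h : IsCompOf Γ (Gstar Γ a)ᶜ K) : a ∉ K :=
  fun hmem => (h.subset hmem) mem_gstar_self

lemma not_adj_of_mem_comp (h : IsCompOf Γ (Gstar Γ a)ᶜ K) {v : V} (hv : v ∈ K) :
    ¬ Γ.Adj a v := fun hadj => (h.subset hv) (Set.mem_insert_iff.2 (Or.inr hadj))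

lemma mem_compl_gstar (hab : a ≠ b) (hnadj : ¬ Γ.Adj a b) : b ∈ (Gstar Γ a)ᶜ := by
  intro hmem
  rcases Set.mem_insert_iff.1 hmem with h | h
  · exact hab h.symm
  · exact hnadj h



lemma raag_comm (h : Γ.Adj a b) : Commute (raagGen Γ a) (raagGen Γ b) := by
  have hr : (FreeGroup.of a * FreeGroup.of b * (FreeGroup.of a)⁻¹ * (FreeGroup.of b)⁻¹)
      ∈ raagRels Γ := ⟨a, b, h, rfl⟩
  have h1 : PresentedGroup.mk (raagRels Γ)
      (FreeGroup.of a * FreeGroup.of b * (FreeGroup.of a)⁻¹ * (FreeGroup.of b)⁻¹) = 1 :=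
    (QuotientGroup.eq_one_iff _).2 (Subgroup.subset_normalClosure hr)
  rw [map_mul, map_mul, map_mul, map_inv, map_inv] at h1
  have h2 : raagGen Γ a * raagGen Γ b * (raagGen Γ a)⁻¹ * (raagGen Γ b)⁻¹ = 1 := h1
  rw [mul_inv_eq_one] at h2
  show raagGen Γ a * raagGen Γ b = raagGen Γ b * raagGen Γ a
  calc raagGen Γ a * raagGen Γ b
      = (raagGen Γ a * raagGen Γ b * (raagGen Γ a)⁻¹) * raagGen Γ a := by group
    _ = raagGen Γ b * raagGen Γ a := by rw [h2]

lemma mulAut_ext {φ ψ : MulAut (RAAG Γ)} (h : ∀ v, φ (raagGen Γ v) = ψ (raagGen Γ v)) :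
    φ = ψ := by
  have : φ.toMonoidHom = ψ.toMonoidHom := PresentedGroup.ext h
  exact MulEquiv.toMonoidHom_injective this

lemma commute_of_gens {φ ψ : MulAut (RAAG Γ)}
    (h : ∀ v, φ (ψ (raagGen Γ v)) = ψ (φ (raagGen Γ v))) : Commute φ ψ :=
  mulAut_ext (fun v => by simpa [MulAut.mul_apply] using h v)

noncomputable def permHom (f : V → Equiv.Perm (Fin 4))
    (hf : ∀ c d, Γ.Adj c d → Commute (f c) (f d)) : RAAG Γ →* Equiv.Perm (Fin 4) :=
  PresentedGroup.toGroup (f := f) (by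
    rintro r ⟨c, d, hcd, rfl⟩
    simp only [map_mul, map_inv, FreeGroup.lift_apply_of]
    rw [(hf c d hcd).eq]
    group)

lemma permHom_gen (f : V → Equiv.Perm (Fin 4))
    (hf : ∀ c d, Γ.Adj c d → Commute (f c) (f d)) (v : V) :
    permHom f hf (raagGen Γ v) = f v := PresentedGroup.toGroup.of _

lemma not_commute_of_witness {φ ψ : MulAut (RAAG Γ)} (f : V → Equiv.Perm (Fin 4))
    (hf : ∀ c d, Γ.Adj c d → Commute (f c) (f d)) (v : V)
    (h : permHom f hf (φ (ψ (raagGen Γ v))) ≠ permHom f hf (ψ (φ (raagGen Γ v)))) :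
    ¬ Commute φ ψ := by
  intro hc
  apply h
  have := congrArg (fun χ : MulAut (RAAG Γ) => permHom f hf (χ (raagGen Γ v))) hc.eq
  simpa [MulAut.mul_apply] using this

open Classical in
noncomputable def trip (a b w : V) (u : V) : Equiv.Perm (Fin 4) :=
  if u = a then Equiv.swap 0 1 else if u = b then Equiv.swap 1 2
    else if u = w then Equiv.swap 2 3 else 1

lemma trip_a (b w : V) : trip a b w a = Equiv.swap 0 1 := by simp [trip]

lemma trip_b (w : V) (h : b ≠ a) : trip a b w b = Equiv.swap 1 2 := by simp [trip, h]

lemma trip_w {w : V} (h1 : w ≠ a) (h2 : w ≠ b) : trip a b w w = Equiv.swap 2 3 := by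
  simp [trip, h1, h2]

lemma trip_comm {w : V} (hab : ¬Γ.Adj a b) (haw : ¬Γ.Adj a w) (hbw : ¬Γ.Adj b w) :
    ∀ c d, Γ.Adj c d → Commute (trip a b w c) (trip a b w d) := by
  intro c d h
  unfold trip
  split_ifs <;> subst_vars <;>
    first
      | exact Commute.one_left _
      | exact Commute.one_right _
      | exact absurd h (Γ.irrefl)
      | exact absurd h hab
      | exact absurd h haw
      | exact absurd h hbw
      | exact absurd h.symm hab
      | exact absurd h.symm haw
      | exact absurd h.symm hbw


end HelperLemmas

section MainHelpers

variable {V : Type} {Γ : SimpleGraph V} {a b : V} {K K' L L' : Set V}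

lemma commute_disjoint {φ ψ : MulAut (RAAG Γ)}
    (h1 : IsPartialConj Γ a K φ) (h3 : IsPartialConj Γ b L ψ)
    (haL : a ∉ L) (hbK : b ∉ K) (hdisj : ∀ v, v ∈ K → v ∉ L) : Commute φ ψ := by
  apply commute_of_gens
  intro v
  by_cases hvK : v ∈ K
  · have hvL := hdisj v hvK
    have e1 : φ (ψ (raagGen Γ v)) = (raagGen Γ a)⁻¹ * raagGen Γ v * raagGen Γ a := by
      rw [h3.2.2 v hvL, h1.2.1 v hvK]
    have e2 : ψ (φ (raagGen Γ v)) = (raagGen Γ a)⁻¹ * raagGen Γ v * raagGen Γ a := by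
      rw [h1.2.1 v hvK, map_mul, map_mul, map_inv, h3.2.2 a haL, h3.2.2 v hvL]
    rw [e1, e2]
  · by_cases hvL : v ∈ L
    · have e1 : φ (ψ (raagGen Γ v)) = (raagGen Γ b)⁻¹ * raagGen Γ v * raagGen Γ b := by
        rw [h3.2.1 v hvL, map_mul, map_mul, map_inv, h1.2.2 b hbK, h1.2.2 v hvK]
      have e2 : ψ (φ (raagGen Γ v)) = (raagGen Γ b)⁻¹ * raagGen Γ v * raagGen Γ b := by
        rw [h1.2.2 v hvK, h3.2.1 v hvL]
      rw [e1, e2]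
    · have e1 : φ (ψ (raagGen Γ v)) = raagGen Γ v := by
        rw [h3.2.2 v hvL, h1.2.2 v hvK]
      have e2 : ψ (φ (raagGen Γ v)) = raagGen Γ v := by
        rw [h1.2.2 v hvK, h3.2.2 v hvL]
      rw [e1, e2]

lemma commute_adj {φ ψ : MulAut (RAAG Γ)}
    (h1 : IsPartialConj Γ a K φ) (h3 : IsPartialConj Γ b L ψ)
    (hadj : Γ.Adj a b) : Commute φ ψ := by
  have haL : a ∉ L := fun h => (h3.1.subset h) (Set.mem_insert_iff.2 (Or.inr hadj.symm))
  have hbK : b ∉ K := fun h => (h1.1.subset h) (Set.mem_insert_iff.2 (Or.inr hadj))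
  apply commute_of_gens
  intro v
  by_cases hvK : v ∈ K <;> by_cases hvL : v ∈ L
  · have e1 : φ (ψ (raagGen Γ v)) =
        (raagGen Γ b)⁻¹ * ((raagGen Γ a)⁻¹ * raagGen Γ v * raagGen Γ a) * raagGen Γ b := by
      rw [h3.2.1 v hvL, map_mul, map_mul, map_inv, h1.2.2 b hbK, h1.2.1 v hvK]
    have e2 : ψ (φ (raagGen Γ v)) =
        (raagGen Γ a)⁻¹ * ((raagGen Γ b)⁻¹ * raagGen Γ v * raagGen Γ b) * raagGen Γ a := by
      rw [h1.2.1 v hvK, map_mul, map_mul, map_inv, h3.2.2 a haL, h3.2.1 v hvL]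
    rw [e1, e2]
    have hc := raag_comm hadj
    calc (raagGen Γ b)⁻¹ * ((raagGen Γ a)⁻¹ * raagGen Γ v * raagGen Γ a) * raagGen Γ b
        = ((raagGen Γ b)⁻¹ * (raagGen Γ a)⁻¹) * raagGen Γ v *
            (raagGen Γ a * raagGen Γ b) := by group
      _ = ((raagGen Γ a)⁻¹ * (raagGen Γ b)⁻¹) * raagGen Γ v *
            (raagGen Γ b * raagGen Γ a) := by rw [← hc.inv_inv.eq, hc.eq]
      _ = (raagGen Γ a)⁻¹ * ((raagGen Γ b)⁻¹ * raagGen Γ v * raagGen Γ b) * raagGen Γ a := by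
            group
  · have e1 : φ (ψ (raagGen Γ v)) = (raagGen Γ a)⁻¹ * raagGen Γ v * raagGen Γ a := by
      rw [h3.2.2 v hvL, h1.2.1 v hvK]
    have e2 : ψ (φ (raagGen Γ v)) = (raagGen Γ a)⁻¹ * raagGen Γ v * raagGen Γ a := by
      rw [h1.2.1 v hvK, map_mul, map_mul, map_inv, h3.2.2 a haL, h3.2.2 v hvL]
    rw [e1, e2]
  · have e1 : φ (ψ (raagGen Γ v)) = (raagGen Γ b)⁻¹ * raagGen Γ v * raagGen Γ b := by
      rw [h3.2.1 v hvL, map_mul, map_mul, map_inv, h1.2.2 b hbK, h1.2.2 v hvK]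
    have e2 : ψ (φ (raagGen Γ v)) = (raagGen Γ b)⁻¹ * raagGen Γ v * raagGen Γ b := by
      rw [h1.2.2 v hvK, h3.2.1 v hvL]
    rw [e1, e2]
  · have e1 : φ (ψ (raagGen Γ v)) = raagGen Γ v := by
      rw [h3.2.2 v hvL, h1.2.2 v hvK]
    have e2 : ψ (φ (raagGen Γ v)) = raagGen Γ v := by
      rw [h1.2.2 v hvK, h3.2.2 v hvL]
    rw [e1, e2]

lemma noncomm_main {φ ψ : MulAut (RAAG Γ)} (hab : a ≠ b) (hnadj : ¬Γ.Adj a b)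
    (h1 : IsPartialConj Γ a K φ) (h3 : IsPartialConj Γ b L ψ)
    (hcase : (a ∈ L ∧ b ∈ K) ∨ (a ∈ L ∧ b ∉ K ∧ ∃ v ∈ K, v ∉ L) ∨
      (a ∉ L ∧ b ∈ K ∧ ∃ v ∈ L, v ∉ K) ∨ (a ∉ L ∧ b ∉ K ∧ K = L)) :
    ¬ Commute φ ψ := by
  have hba : b ≠ a := hab.symm
  have hbnadj : ¬Γ.Adj b a := fun h => hnadj h.symm
  have haK : a ∉ K := notMem_of_comp h1.1
  have hbL : b ∉ L := notMem_of_comp h3.1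
  have hbGa : b ∈ (Gstar Γ a)ᶜ := mem_compl_gstar hab hnadj
  have haGb : a ∈ (Gstar Γ b)ᶜ := mem_compl_gstar hba hbnadj
  rcases hcase with ⟨haL, hbK⟩ | ⟨haL, hbK, v, hvK, hvL⟩ | ⟨haL, hbK, v, hvL, hvK⟩ |
    ⟨haL, hbK, hKL⟩
  · -- a ∈ L, b ∈ K : witness generator a, letters a, b
    have hf := trip_comm (w := a) hnadj (Γ.irrefl) hbnadj
    apply not_commute_of_witness (trip a b a) hf a
    have e1 : φ (ψ (raagGen Γ a)) =
        ((raagGen Γ a)⁻¹ * raagGen Γ b * raagGen Γ a)⁻¹ * raagGen Γ a *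
          ((raagGen Γ a)⁻¹ * raagGen Γ b * raagGen Γ a) := by
      rw [h3.2.1 a haL, map_mul, map_mul, map_inv, h1.2.1 b hbK, h1.2.2 a haK]
    have e2 : ψ (φ (raagGen Γ a)) = (raagGen Γ b)⁻¹ * raagGen Γ a * raagGen Γ b := by
      rw [h1.2.2 a haK, h3.2.1 a haL]
    rw [e1, e2]
    simp only [map_mul, map_inv, permHom_gen, trip_a, trip_b _ hba]
    decide
  · -- a ∈ L, b ∉ K, v ∈ K \ L
    have hva : v ≠ a := fun h => haK (h ▸ hvK)
    have hvb : v ≠ b := fun h => hbK (h ▸ hvK)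
    have hav : ¬Γ.Adj a v := not_adj_of_mem_comp h1.1 hvK
    have hbv : ¬Γ.Adj b v := fun h => hbK (h1.1.closed hvK hbGa h.symm)
    have hf := trip_comm (w := v) hnadj hav hbv
    apply not_commute_of_witness (trip a b v) hf v
    have e1 : φ (ψ (raagGen Γ v)) = (raagGen Γ a)⁻¹ * raagGen Γ v * raagGen Γ a := by
      rw [h3.2.2 v hvL, h1.2.1 v hvK]
    have e2 : ψ (φ (raagGen Γ v)) =
        ((raagGen Γ b)⁻¹ * raagGen Γ a * raagGen Γ b)⁻¹ * raagGen Γ v *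
          ((raagGen Γ b)⁻¹ * raagGen Γ a * raagGen Γ b) := by
      rw [h1.2.1 v hvK, map_mul, map_mul, map_inv, h3.2.1 a haL, h3.2.2 v hvL]
    rw [e1, e2]
    simp only [map_mul, map_inv, permHom_gen, trip_a, trip_b _ hba, trip_w hva hvb]
    decide
  · -- a ∉ L, b ∈ K, v ∈ L \ K
    have hva : v ≠ a := fun h => haL (h ▸ hvL)
    have hvb : v ≠ b := fun h => hbL (h ▸ hvL)
    have hbv : ¬Γ.Adj b v := not_adj_of_mem_comp h3.1 hvL
    have hav : ¬Γ.Adj a v := fun h => haL (h3.1.closed hvL haGb h.symm)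
    have hf := trip_comm (w := v) hnadj hav hbv
    apply not_commute_of_witness (trip a b v) hf v
    have e1 : φ (ψ (raagGen Γ v)) =
        ((raagGen Γ a)⁻¹ * raagGen Γ b * raagGen Γ a)⁻¹ * raagGen Γ v *
          ((raagGen Γ a)⁻¹ * raagGen Γ b * raagGen Γ a) := by
      rw [h3.2.1 v hvL, map_mul, map_mul, map_inv, h1.2.1 b hbK, h1.2.2 v hvK]
    have e2 : ψ (φ (raagGen Γ v)) = (raagGen Γ b)⁻¹ * raagGen Γ v * raagGen Γ b := by
      rw [h1.2.2 v hvK, h3.2.1 v hvL]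
    rw [e1, e2]
    simp only [map_mul, map_inv, permHom_gen, trip_a, trip_b _ hba, trip_w hva hvb]
    decide
  · -- a ∉ L, b ∉ K, K = L : witness v ∈ K
    obtain ⟨v, hvK⟩ := h1.1.nonempty
    have hvL : v ∈ L := hKL ▸ hvK
    have hva : v ≠ a := fun h => haK (h ▸ hvK)
    have hvb : v ≠ b := fun h => hbL (h ▸ hvL)
    have hav : ¬Γ.Adj a v := not_adj_of_mem_comp h1.1 hvK
    have hbv : ¬Γ.Adj b v := not_adj_of_mem_comp h3.1 hvL
    have hf := trip_comm (w := v) hnadj hav hbv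
    apply not_commute_of_witness (trip a b v) hf v
    have e1 : φ (ψ (raagGen Γ v)) =
        (raagGen Γ b)⁻¹ * ((raagGen Γ a)⁻¹ * raagGen Γ v * raagGen Γ a) * raagGen Γ b := by
      rw [h3.2.1 v hvL, map_mul, map_mul, map_inv, h1.2.2 b hbK, h1.2.1 v hvK]
    have e2 : ψ (φ (raagGen Γ v)) =
        (raagGen Γ a)⁻¹ * ((raagGen Γ b)⁻¹ * raagGen Γ v * raagGen Γ b) * raagGen Γ a := by
      rw [h1.2.1 v hvK, map_mul, map_mul, map_inv, h3.2.2 a haL, h3.2.1 v hvL]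
    rw [e1, e2]
    simp only [map_mul, map_inv, permHom_gen, trip_a, trip_b _ hba, trip_w hva hvb]
    decide

lemma build_case (hK : IsCompOf Γ (Gstar Γ a)ᶜ K) (hK' : IsCompOf Γ (Gstar Γ a)ᶜ K')
    (hKK' : K ≠ K') (hL : IsCompOf Γ (Gstar Γ b)ᶜ L) (hL' : IsCompOf Γ (Gstar Γ b)ᶜ L')
    (hLL' : L ≠ L')
    (C : a ∈ L ∨ b ∈ K ∨ K = L) (C' : a ∈ L' ∨ b ∈ K ∨ K = L')
    (C'' : a ∈ L ∨ b ∈ K' ∨ K' = L) :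
    (a ∈ L ∧ b ∈ K) ∨ (a ∈ L ∧ b ∉ K ∧ ∃ v ∈ K, v ∉ L) ∨
      (a ∉ L ∧ b ∈ K ∧ ∃ v ∈ L, v ∉ K) ∨ (a ∉ L ∧ b ∉ K ∧ K = L) := by
  by_cases haL : a ∈ L <;> by_cases hbK : b ∈ K
  · exact Or.inl ⟨haL, hbK⟩
  · refine Or.inr (Or.inl ⟨haL, hbK, ?_⟩)
    by_contra h
    push_neg at h
    have hKL' : K = L' := by
      rcases C' with h' | h' | h'
      · exact absurd (hL.eq_of_mem_inter hL' haL h') hLL'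
      · exact absurd h' hbK
      · exact h'
    obtain ⟨v, hv⟩ := hK.nonempty
    exact hLL' (hL.eq_of_mem_inter hL' (h v hv) (hKL' ▸ hv))
  · refine Or.inr (Or.inr (Or.inl ⟨haL, hbK, ?_⟩))
    by_contra h
    push_neg at h
    have hK'L : K' = L := by
      rcases C'' with h' | h' | h'
      · exact absurd h' haL
      · exact absurd (hK.eq_of_mem_inter hK' hbK h') hKK'
      · exact h'
    obtain ⟨v, hv⟩ := hL.nonempty
    exact hKK' (hK.eq_of_mem_inter hK' (h v hv) (hK'L ▸ hv))
  · rcases C with h | h | h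
    · exact absurd h haL
    · exact absurd h hbK
    · exact Or.inr (Or.inr (Or.inr ⟨haL, hbK, h⟩))

end MainHelpers

set_option maxHeartbeats 1000000
/-- Lemma 4.4. Four distinct partial conjugations
`π_{a,K₁}, π_{a,K₂}, π_{b,L₁}, π_{b,L₂}` pairwise fail to commute (across the two acting
letters) if and only if they form a δ-p-set. -/
theorem noncommuting_iff_delta_p_set {V : Type} [Fintype V] (Γ : SimpleGraph V)
    (hZ : (Zset Γ).Nonempty) (a b : V) (hab : a ≠ b)
    (K₁ K₂ L₁ L₂ : Set V) (hK : K₁ ≠ K₂) (hL : L₁ ≠ L₂)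
    (φ₁ φ₂ ψ₁ ψ₂ : MulAut (RAAG Γ))
    (h1 : IsPartialConj Γ a K₁ φ₁) (h2 : IsPartialConj Γ a K₂ φ₂)
    (h3 : IsPartialConj Γ b L₁ ψ₁) (h4 : IsPartialConj Γ b L₂ ψ₂) :
    (¬Commute φ₁ ψ₁ ∧ ¬Commute φ₁ ψ₂ ∧ ¬Commute φ₂ ψ₁ ∧ ¬Commute φ₂ ψ₂) ↔
      IsDeltaPSet Γ {(a, K₁), (a, K₂), (b, L₁), (b, L₂)} := by
  have haK1 : a ∉ K₁ := notMem_of_comp h1.1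
  have haK2 : a ∉ K₂ := notMem_of_comp h2.1
  have hbL1 : b ∉ L₁ := notMem_of_comp h3.1
  have hbL2 : b ∉ L₂ := notMem_of_comp h4.1
  constructor
  · rintro ⟨n11, n12, n21, n22⟩
    have hnadj : ¬Γ.Adj a b := fun hadj => n11 (commute_adj h1 h3 hadj)
    have hcond : ∀ (K L : Set V) (φ ψ : MulAut (RAAG Γ)), IsPartialConj Γ a K φ →
        IsPartialConj Γ b L ψ → ¬Commute φ ψ → a ∈ L ∨ b ∈ K ∨ K = L := by
      intro K L φ ψ hKp hLp hn
      by_contra hc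
      push_neg at hc
      obtain ⟨haL, hbK, hKL⟩ := hc
      apply hn
      apply commute_disjoint hKp hLp haL hbK
      intro v hvK hvL
      apply hKL
      have hbGa : b ∈ (Gstar Γ a)ᶜ := mem_compl_gstar hab hnadj
      have haGb : a ∈ (Gstar Γ b)ᶜ := mem_compl_gstar hab.symm (fun h => hnadj h.symm)
      have hKsub : K ⊆ (Gstar Γ b)ᶜ := by
        intro u hu hmem
        rcases Set.mem_insert_iff.1 hmem with h | h
        · exact hbK (h ▸ hu)
        · exact hbK (hKp.1.closed hu hbGa h.symm)
      have hLsub : L ⊆ (Gstar Γ a)ᶜ := by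
        intro u hu hmem
        rcases Set.mem_insert_iff.1 hmem with h | h
        · exact haL (h ▸ hu)
        · exact haL (hLp.1.closed hu haGb h.symm)
      exact (hKp.1.subset_of_inter hLp.1 hKsub hvK hvL).antisymm
        (hLp.1.subset_of_inter hKp.1 hLsub hvL hvK)
    have C11 := hcond K₁ L₁ φ₁ ψ₁ h1 h3 n11
    have C12 := hcond K₁ L₂ φ₁ ψ₂ h1 h4 n12
    have C21 := hcond K₂ L₁ φ₂ ψ₁ h2 h3 n21
    have C22 := hcond K₂ L₂ φ₂ ψ₂ h2 h4 n22
    refine ⟨?_, ?_, {(a, K₁), (a, K₂)}, {(b, L₁), (b, L₂)}, ?_, ?_,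
      ⟨(a, K₁), by simp⟩, ⟨(b, L₁), by simp⟩, ?_⟩
    · rintro p hp
      simp only [Set.mem_insert_iff, Set.mem_singleton_iff] at hp
      rcases hp with rfl | rfl | rfl | rfl
      exacts [h1.1, h2.1, h3.1, h4.1]
    · intro v hv
      by_cases hva : v = a
      · right
        have hset : {p ∈ ({(a, K₁), (a, K₂), (b, L₁), (b, L₂)} : Set (V × Set V)) | p.1 = v}
            = {(a, K₁), (a, K₂)} := by
          ext p
          simp only [Set.mem_sep_iff, Set.mem_insert_iff, Set.mem_singleton_iff]
          constructor
          · rintro ⟨rfl | rfl | rfl | rfl, h⟩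
            · exact Or.inl rfl
            · exact Or.inr rfl
            · exact absurd (h.trans hva) hab.symm
            · exact absurd (h.trans hva) hab.symm
          · rintro (rfl | rfl)
            · exact ⟨Or.inl rfl, hva.symm⟩
            · exact ⟨Or.inr (Or.inl rfl), hva.symm⟩
        rw [hset]
        exact Set.ncard_pair (fun h => hK (congrArg Prod.snd h))
      · by_cases hvb : v = b
        · right
          have hset : {p ∈ ({(a, K₁), (a, K₂), (b, L₁), (b, L₂)} : Set (V × Set V)) | p.1 = v}
              = {(b, L₁), (b, L₂)} := by
            ext p
            simp only [Set.mem_sep_iff, Set.mem_insert_iff, Set.mem_singleton_iff]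
            constructor
            · rintro ⟨rfl | rfl | rfl | rfl, h⟩
              · exact absurd (h.trans hvb) hab
              · exact absurd (h.trans hvb) hab
              · exact Or.inl rfl
              · exact Or.inr rfl
            · rintro (rfl | rfl)
              · exact ⟨Or.inr (Or.inr (Or.inl rfl)), hvb.symm⟩
              · exact ⟨Or.inr (Or.inr (Or.inr rfl)), hvb.symm⟩
          rw [hset]
          exact Set.ncard_pair (fun h => hL (congrArg Prod.snd h))
        · left
          have hset : {p ∈ ({(a, K₁), (a, K₂), (b, L₁), (b, L₂)} : Set (V × Set V)) | p.1 = v}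
              = ∅ := by
            apply Set.eq_empty_iff_forall_notMem.2
            rintro p ⟨hp, hp1⟩
            simp only [Set.mem_insert_iff, Set.mem_singleton_iff] at hp
            rcases hp with rfl | rfl | rfl | rfl
            · exact hva hp1.symm
            · exact hva hp1.symm
            · exact hvb hp1.symm
            · exact hvb hp1.symm
          rw [hset]
          exact Set.ncard_empty _
    · rw [Set.insert_union, Set.singleton_union]
    · rw [Set.disjoint_left]
      rintro p hp hq
      simp only [Set.mem_insert_iff, Set.mem_singleton_iff] at hp hq
      rcases hp with rfl | rfl <;> rcases hq with h | h <;>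
        exact hab (congrArg Prod.fst h)
    · rintro p hp q hq
      simp only [Set.mem_insert_iff, Set.mem_singleton_iff] at hp hq
      rcases hp with rfl | rfl <;> rcases hq with rfl | rfl
      exacts [C11, C12, C21, C22]
  · rintro ⟨hsub, hcount, Q₁, Q₂, hunion, hdQ, hne1, hne2, hcross⟩
    have condS : ∀ p q : V × Set V, ((p ∈ Q₁ ∧ q ∈ Q₂) ∨ (q ∈ Q₁ ∧ p ∈ Q₂)) →
        p.1 ∈ q.2 ∨ q.1 ∈ p.2 ∨ p.2 = q.2 := by
      rintro p q (⟨hp, hq⟩ | ⟨hq, hp⟩)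
      · exact hcross p hp q hq
      · rcases hcross q hq p hp with h | h | h
        · exact Or.inr (Or.inl h)
        · exact Or.inl h
        · exact Or.inr (Or.inr h.symm)
    have memQ : ∀ p : V × Set V,
        p ∈ ({(a, K₁), (a, K₂), (b, L₁), (b, L₂)} : Set (V × Set V)) →
        p ∈ Q₁ ∨ p ∈ Q₂ := by
      intro p hp
      rw [← hunion] at hp
      exact hp
    have mQ1 : (a, K₁) ∈ Q₁ ∨ (a, K₁) ∈ Q₂ := memQ _ (by simp)
    have mQ2 : (a, K₂) ∈ Q₁ ∨ (a, K₂) ∈ Q₂ := memQ _ (by simp)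
    have mQ3 : (b, L₁) ∈ Q₁ ∨ (b, L₁) ∈ Q₂ := memQ _ (by simp)
    have mQ4 : (b, L₂) ∈ Q₁ ∨ (b, L₂) ∈ Q₂ := memQ _ (by simp)
    have hsame_a : ((a, K₁) ∈ Q₁ ∧ (a, K₂) ∈ Q₁) ∨ ((a, K₁) ∈ Q₂ ∧ (a, K₂) ∈ Q₂) := by
      rcases mQ1 with h1' | h1' <;> rcases mQ2 with h2' | h2'
      · exact Or.inl ⟨h1', h2'⟩
      · exfalso
        rcases condS (a, K₁) (a, K₂) (Or.inl ⟨h1', h2'⟩) with h | h | h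
        · exact haK2 h
        · exact haK1 h
        · exact hK h
      · exfalso
        rcases condS (a, K₁) (a, K₂) (Or.inr ⟨h2', h1'⟩) with h | h | h
        · exact haK2 h
        · exact haK1 h
        · exact hK h
      · exact Or.inr ⟨h1', h2'⟩
    have hsame_b : ((b, L₁) ∈ Q₁ ∧ (b, L₂) ∈ Q₁) ∨ ((b, L₁) ∈ Q₂ ∧ (b, L₂) ∈ Q₂) := by
      rcases mQ3 with h3' | h3' <;> rcases mQ4 with h4' | h4'
      · exact Or.inl ⟨h3', h4'⟩
      · exfalso
        rcases condS (b, L₁) (b, L₂) (Or.inl ⟨h3', h4'⟩) with h | h | h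
        · exact hbL2 h
        · exact hbL1 h
        · exact hL h
      · exfalso
        rcases condS (b, L₁) (b, L₂) (Or.inr ⟨h4', h3'⟩) with h | h | h
        · exact hbL2 h
        · exact hbL1 h
        · exact hL h
      · exact Or.inr ⟨h3', h4'⟩
    have hCall : (a ∈ L₁ ∨ b ∈ K₁ ∨ K₁ = L₁) ∧ (a ∈ L₂ ∨ b ∈ K₁ ∨ K₁ = L₂) ∧
        (a ∈ L₁ ∨ b ∈ K₂ ∨ K₂ = L₁) ∧ (a ∈ L₂ ∨ b ∈ K₂ ∨ K₂ = L₂) := by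
      rcases hsame_a with ⟨ha1, ha2⟩ | ⟨ha1, ha2⟩ <;>
        rcases hsame_b with ⟨hb1, hb2⟩ | ⟨hb1, hb2⟩
      · exfalso
        obtain ⟨x, hx⟩ := hne2
        have hxQ : x ∈ ({(a, K₁), (a, K₂), (b, L₁), (b, L₂)} : Set (V × Set V)) := by
          rw [← hunion]; exact Or.inr hx
        simp only [Set.mem_insert_iff, Set.mem_singleton_iff] at hxQ
        rcases hxQ with rfl | rfl | rfl | rfl
        · exact Set.disjoint_left.1 hdQ ha1 hx
        · exact Set.disjoint_left.1 hdQ ha2 hx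
        · exact Set.disjoint_left.1 hdQ hb1 hx
        · exact Set.disjoint_left.1 hdQ hb2 hx
      · exact ⟨condS (a, K₁) (b, L₁) (Or.inl ⟨ha1, hb1⟩),
          condS (a, K₁) (b, L₂) (Or.inl ⟨ha1, hb2⟩),
          condS (a, K₂) (b, L₁) (Or.inl ⟨ha2, hb1⟩),
          condS (a, K₂) (b, L₂) (Or.inl ⟨ha2, hb2⟩)⟩
      · exact ⟨condS (a, K₁) (b, L₁) (Or.inr ⟨hb1, ha1⟩),
          condS (a, K₁) (b, L₂) (Or.inr ⟨hb2, ha1⟩),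
          condS (a, K₂) (b, L₁) (Or.inr ⟨hb1, ha2⟩),
          condS (a, K₂) (b, L₂) (Or.inr ⟨hb2, ha2⟩)⟩
      · exfalso
        obtain ⟨x, hx⟩ := hne1
        have hxQ : x ∈ ({(a, K₁), (a, K₂), (b, L₁), (b, L₂)} : Set (V × Set V)) := by
          rw [← hunion]; exact Or.inl hx
        simp only [Set.mem_insert_iff, Set.mem_singleton_iff] at hxQ
        rcases hxQ with rfl | rfl | rfl | rfl
        · exact Set.disjoint_left.1 hdQ hx ha1
        · exact Set.disjoint_left.1 hdQ hx ha2
        · exact Set.disjoint_left.1 hdQ hx hb1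
        · exact Set.disjoint_left.1 hdQ hx hb2
    obtain ⟨C11, C12, C21, C22⟩ := hCall
    have hnadj : ¬Γ.Adj a b := by
      intro hadj
      have haGL : ∀ L : Set V, IsCompOf Γ (Gstar Γ b)ᶜ L → a ∉ L := fun L hLc h =>
        (hLc.subset h) (Set.mem_insert_iff.2 (Or.inr hadj.symm))
      have hbGK : ∀ K : Set V, IsCompOf Γ (Gstar Γ a)ᶜ K → b ∉ K := fun K hKc h =>
        (hKc.subset h) (Set.mem_insert_iff.2 (Or.inr hadj))
      have e1 : K₁ = L₁ := (C11.resolve_left (haGL _ h3.1)).resolve_left (hbGK _ h1.1)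
      have e2 : K₁ = L₂ := (C12.resolve_left (haGL _ h4.1)).resolve_left (hbGK _ h1.1)
      exact hL (e1 ▸ e2)
    exact ⟨noncomm_main hab hnadj h1 h3 (build_case h1.1 h2.1 hK h3.1 h4.1 hL C11 C12 C21),
      noncomm_main hab hnadj h1 h4 (build_case h1.1 h2.1 hK h4.1 h3.1 hL.symm C12 C11 C22),
      noncomm_main hab hnadj h2 h3 (build_case h2.1 h1.1 hK.symm h3.1 h4.1 hL C21 C22 C11),
      noncomm_main hab hnadj h2 h4 (build_case h2.1 h1.1 hK.symm h4.1 h3.1 hL.symm C22 C21 C12)⟩
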